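/- Let 1 > β_1 ≥ … ≥ β_m > 0 with ∑_{k=1}^m β_k > 1, let μ_j = 1/p + (∑_{k=1}^j β_k - 1)/(j-1) for 2 ≤ j ≤ m, and suppose there is a unique l with μ_l = max_j μ_j. Then β_j > μ_l - 1/p for all j ≤ l, and β_j < μ_l - 1/p for all j > l (when such indices exist), where in the first claim it suffices that μ_l > μ_{l-1} (with the convention μ_1 = -1) and in the second that μ_{l+1} < μ_l. -/

import Mathlib

/-- Position of the β_j relative to the critical weight μ_c = μ_l: with the convention
    μ₁ = -1, if μ_l > μ_{l-1} then β_j > μ_l - 1/p for all j ≤ l, and if μ_{l+1} < μ_l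
    then β_j < μ_l - 1/p for all l < j ≤ m. -/
theorem stmt8 (p : ℝ) (hp : 1 < p) (m : ℕ) (hm : 2 ≤ m) (β : ℕ → ℝ)
    (hmono : ∀ j k, 1 ≤ j → j ≤ k → k ≤ m → β k ≤ β j)
    (hpos : ∀ k, 1 ≤ k → k ≤ m → 0 < β k)
    (hlt : ∀ k, 1 ≤ k → k ≤ m → β k < 1)
    (hsum : 1 < ∑ k ∈ Finset.Icc 1 m, β k)
    (μ : ℕ → ℝ) (hμ1 : μ 1 = -1)
    (hμ : ∀ j, 2 ≤ j → j ≤ m →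
      μ j = 1 / p + ((∑ k ∈ Finset.Icc 1 j, β k) - 1) / ((j : ℝ) - 1))
    (l : ℕ) (hl2 : 2 ≤ l) (hlm : l ≤ m)
    (hmax : ∀ j, 2 ≤ j → j ≤ m → μ j ≤ μ l)
    (h1 : μ (l - 1) < μ l) (h2 : l < m → μ (l + 1) < μ l) :
    (∀ j, 1 ≤ j → j ≤ l → μ l - 1 / p < β j) ∧
    (∀ j, l < j → j ≤ m → β j < μ l - 1 / p) := by
  have hμl := hμ l hl2 hlm
  have hl1 : (1:ℝ) < (l:ℝ) := by exact_mod_cast hl2.trans_lt' (by norm_num)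
  constructor
  · intro j hj1 hjl
    have key : μ l - 1 / p < β l := by
      rcases eq_or_lt_of_le hl2 with h | h3
      · -- l = 2
        have hl : l = 2 := h.symm
        subst hl
        have hs2 : ∑ k ∈ Finset.Icc 1 2, β k = β 1 + β 2 := by
          rw [show Finset.Icc 1 2 = {1, 2} by decide]
          simp
        have hb1 : β 1 < 1 := hlt 1 le_rfl (by omega)
        rw [hμl, hs2]
        push_cast
        ring_nf
        linarith
      · -- l ≥ 3
        have hl3 : 3 ≤ l := h3
        have hμl' := hμ (l - 1) (by omega) (by omega)
        have hsplit : ∑ k ∈ Finset.Icc 1 l, β k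
            = (∑ k ∈ Finset.Icc 1 (l - 1), β k) + β l := by
          have : l = (l - 1) + 1 := by omega
          rw [this, Finset.sum_Icc_succ_top (by omega)]
          simp
        set A := ∑ k ∈ Finset.Icc 1 (l - 1), β k with hA
        have hcast : ((l - 1 : ℕ) : ℝ) = (l : ℝ) - 1 := by
          have : 1 ≤ l := by omega
          push_cast [this]; ring
        have hx2 : (0:ℝ) < (l:ℝ) - 2 := by
          have : (3:ℝ) ≤ (l:ℝ) := by exact_mod_cast hl3
          linarith
        have hx1 : (0:ℝ) < (l:ℝ) - 1 := by linarith
        rw [hμl', hμl, hcast, hsplit] at h1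
        have h1' : (A - 1) / ((l:ℝ) - 1 - 1) < (A + β l - 1) / ((l:ℝ) - 1) := by
          linarith
        rw [div_lt_div_iff₀ (by linarith) hx1] at h1'
        rw [hμl, hsplit]
        rw [show 1 / p + (A + β l - 1) / ((l:ℝ) - 1) - 1 / p
            = (A + β l - 1) / ((l:ℝ) - 1) by ring]
        rw [div_lt_iff₀ hx1]
        nlinarith
    have := hmono j l hj1 hjl hlm
    linarith
  · intro j hlj hjm
    have hlm' : l < m := lt_of_lt_of_le hlj hjm
    have h2' := h2 hlm'
    have hμl1 := hμ (l + 1) (by omega) (by omega)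
    have hsplit : ∑ k ∈ Finset.Icc 1 (l + 1), β k
        = (∑ k ∈ Finset.Icc 1 l, β k) + β (l + 1) := by
      rw [Finset.sum_Icc_succ_top (by omega)]
    set S := ∑ k ∈ Finset.Icc 1 l, β k with hS
    have hx1 : (0:ℝ) < (l:ℝ) - 1 := by linarith
    have hx0 : (0:ℝ) < (l:ℝ) := by linarith
    rw [hμl1, hμl, hsplit] at h2'
    have h2'' : (S + β (l + 1) - 1) / ((l:ℝ) + 1 - 1) < (S - 1) / ((l:ℝ) - 1) := by
      push_cast at h2'
      linarith
    rw [div_lt_div_iff₀ (by linarith) hx1] at h2''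
    have key : β (l + 1) < μ l - 1 / p := by
      rw [hμl, show 1 / p + (S - 1) / ((l:ℝ) - 1) - 1 / p = (S - 1) / ((l:ℝ) - 1) by ring]
      rw [lt_div_iff₀ hx1]
      nlinarith
    have := hmono (l + 1) j (by omega) hlj hjm
    linarith
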